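/- Let n ≥ 1 and let J² : Λ²(gl(n,ℝ)) → (ℝⁿ → Λ²(ℝⁿ)) be the linear map determined by J²(A ∧ B)(x) = (Aᵀx) ∧ (Bᵀx) for A, B ∈ gl(n,ℝ) and x ∈ ℝⁿ (equivalently, J²(E_{ij} ∧ E_{kl})(x) = x_i x_k (e_j ∧ e_l)). Then the kernel of J² has dimension n²(n²−1)/4. -/

import Mathlib

open scoped Matrix

open ExteriorAlgebra

namespace Stmt6Aux

variable {M : Type*} [AddCommGroup M] [Module ℝ M]

noncomputable def altCoord (f g : M →ₗ[ℝ] ℝ) : M [⋀^Fin 2]→ₗ[ℝ] ℝ :=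
  (Matrix.detRowAlternating (R := ℝ) (n := Fin 2)).compLinearMap
    (LinearMap.pi ![f, g])

lemma altCoord_apply (f g : M →ₗ[ℝ] ℝ) (v : Fin 2 → M) :
    altCoord f g v = f (v 0) * g (v 1) - g (v 0) * f (v 1) := by
  have : altCoord f g v = Matrix.det (Matrix.of fun i j => (![f, g] j) (v i)) := rfl
  rw [this, Matrix.det_fin_two]
  simp

noncomputable def coord2 (f g : M →ₗ[ℝ] ℝ) : ExteriorAlgebra ℝ M →ₗ[ℝ] ℝ :=
  liftAlternating (fun k => match k with
    | 2 => altCoord f g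
    | _ => 0)

lemma coord2_ιMulti (f g : M →ₗ[ℝ] ℝ) (v : Fin 2 → M) :
    coord2 f g (ιMulti ℝ 2 v) = f (v 0) * g (v 1) - g (v 0) * f (v 1) := by
  rw [coord2, liftAlternating_apply_ιMulti]
  exact altCoord_apply f g v

lemma ιMulti_two (x y : M) : ιMulti ℝ 2 ![x, y] = ι ℝ x * ι ℝ y := by
  simp [ιMulti_succ_apply, Matrix.vecTail]

lemma coord2_ι_mul_ι (f g : M →ₗ[ℝ] ℝ) (x y : M) :
    coord2 f g (ι ℝ x * ι ℝ y) = f x * g y - g x * f y := by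
  rw [← ιMulti_two, coord2_ιMulti]; simp

lemma ι_mul_ι_anticomm (x y : M) : ι ℝ x * ι ℝ y = -(ι ℝ y * ι ℝ x) :=
  eq_neg_of_add_eq_zero_left (ι_add_mul_swap x y)

/-- index type of strictly increasing pairs -/
abbrev PairLT (m : ℕ) := {p : Fin m × Fin m // p.1 < p.2}

/-- index type of weakly increasing pairs -/
abbrev PairLE (m : ℕ) := {p : Fin m × Fin m // p.1 ≤ p.2}

def pairLTEquiv (m : ℕ) : PairLT m ≃ (Σ i : Fin m, Fin i.1) where
  toFun p := ⟨p.1.2, ⟨p.1.1, p.2⟩⟩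
  invFun s := ⟨(⟨s.2.1, s.2.2.trans s.1.2⟩, s.1), s.2.2⟩
  left_inv := by rintro ⟨⟨i, j⟩, h⟩; rfl
  right_inv := by rintro ⟨i, j⟩; rfl

def pairLEEquiv (m : ℕ) : PairLE m ≃ (Σ i : Fin m, Fin (i.1 + 1)) where
  toFun p := ⟨p.1.2, ⟨p.1.1, Nat.lt_succ_of_le p.2⟩⟩
  invFun s := ⟨(⟨s.2.1, (Nat.lt_succ_iff.mp s.2.2).trans_lt s.1.2⟩, s.1),
    Nat.lt_succ_iff.mp s.2.2⟩
  left_inv := by rintro ⟨⟨i, j⟩, h⟩; rfl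
  right_inv := by rintro ⟨i, j⟩; rfl

lemma card_pairLT (m : ℕ) : Fintype.card (PairLT m) * 2 = m * (m - 1) := by
  rw [Fintype.card_congr (pairLTEquiv m), Fintype.card_sigma]
  simp only [Fintype.card_fin]
  rw [Fin.sum_univ_eq_sum_range (fun i => i) m]
  exact Finset.sum_range_id_mul_two m

lemma card_pairLE (m : ℕ) : Fintype.card (PairLE m) * 2 = m * (m + 1) := by
  rw [Fintype.card_congr (pairLEEquiv m), Fintype.card_sigma]
  simp only [Fintype.card_fin]
  rw [Fin.sum_univ_eq_sum_range (fun i => i + 1) m]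
  have h := Finset.sum_range_id_mul_two m
  have : ∑ i ∈ Finset.range m, (i + 1) = (∑ i ∈ Finset.range m, i) + m := by
    rw [Finset.sum_add_distrib]; simp
  rw [this]
  rcases m with _ | k
  · simp
  · have h' : (∑ i ∈ Finset.range (k+1), i) * 2 = (k+1) * k := by simpa using h
    calc (∑ i ∈ Finset.range (k+1), i + (k+1)) * 2
        = (∑ i ∈ Finset.range (k+1), i) * 2 + (k+1) * 2 := by ring
      _ = (k+1) * k + (k+1) * 2 := by rw [h']
      _ = (k+1) * ((k+1) + 1) := by ring

variable {m : ℕ} (b : Module.Basis (Fin m) ℝ M)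

noncomputable def wFam : PairLT m → ⋀[ℝ]^2 M := fun p =>
  ⟨ιMulti ℝ 2 ![b p.1.1, b p.1.2], ιMulti_range ℝ 2 (Set.mem_range_self _)⟩

lemma mem_span_pairs (x y : M) :
    ι ℝ x * ι ℝ y ∈ Submodule.span ℝ
      (Set.range fun p : PairLT m => ιMulti ℝ 2 ![b p.1.1, b p.1.2]) := by
  set S := Set.range fun p : PairLT m => ιMulti ℝ 2 ![b p.1.1, b p.1.2] with hS
  have base : ∀ i j : Fin m, ι ℝ (b i) * ι ℝ (b j) ∈ Submodule.span ℝ S := by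
    intro i j
    rcases lt_trichotomy i j with h | h | h
    · exact Submodule.subset_span ⟨⟨(i, j), h⟩, (ιMulti_two _ _)⟩
    · subst h; rw [ι_sq_zero]; exact Submodule.zero_mem _
    · rw [ι_mul_ι_anticomm]
      exact Submodule.neg_mem _ (Submodule.subset_span ⟨⟨(j, i), h⟩, (ιMulti_two _ _)⟩)
  rw [← b.sum_repr x, ← b.sum_repr y, map_sum, map_sum, Finset.sum_mul]
  refine Submodule.sum_mem _ fun i _ => ?_
  rw [Finset.mul_sum]
  refine Submodule.sum_mem _ fun j _ => ?_
  rw [map_smul, map_smul, smul_mul_assoc, mul_smul_comm]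
  exact Submodule.smul_mem _ _ (Submodule.smul_mem _ _ (base i j))

lemma span_wFam_top : Submodule.span ℝ (Set.range (wFam b)) = ⊤ := by
  apply Submodule.map_injective_of_injective (Submodule.injective_subtype (⋀[ℝ]^2 M))
  rw [Submodule.map_span, Submodule.map_top, Submodule.range_subtype]
  have himg : (⋀[ℝ]^2 M).subtype '' Set.range (wFam b)
      = Set.range fun p : PairLT m => ιMulti ℝ 2 ![b p.1.1, b p.1.2] := by
    rw [← Set.range_comp]; rfl
  rw [himg]
  apply le_antisymm
  · rw [Submodule.span_le]
    rintro _ ⟨p, rfl⟩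
    exact ιMulti_range ℝ 2 (Set.mem_range_self _)
  · rw [← ιMulti_span_fixedDegree]
    rw [Submodule.span_le]
    rintro _ ⟨v, rfl⟩
    have hv : v = ![v 0, v 1] := by
      funext i
      fin_cases i <;> rfl
    rw [hv, ιMulti_two]
    exact mem_span_pairs b (v 0) (v 1)

lemma wFam_indep : LinearIndependent ℝ (wFam b) := by
  rw [Fintype.linearIndependent_iff]
  intro g hg p0
  obtain ⟨⟨s, t⟩, hst⟩ := p0
  have hg' : (∑ p : PairLT m, g p • ιMulti ℝ 2 ![b p.1.1, b p.1.2])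
      = (0 : ExteriorAlgebra ℝ M) := by
    have := congrArg ((⋀[ℝ]^2 M).subtype) hg
    simpa [map_sum, wFam] using this
  have happ := congrArg (coord2 (b.coord s) (b.coord t)) hg'
  rw [map_sum, map_zero] at happ
  have key : ∀ p : PairLT m,
      coord2 (b.coord s) (b.coord t) (g p • ιMulti ℝ 2 ![b p.1.1, b p.1.2])
      = if p = ⟨(s, t), hst⟩ then g p else 0 := by
    rintro ⟨⟨i, j⟩, hij⟩
    rw [map_smul, coord2_ιMulti]
    simp only [Matrix.cons_val_zero, Matrix.cons_val_one, Matrix.head_cons,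
      Module.Basis.coord_apply, Module.Basis.repr_self, Finsupp.single_apply, smul_eq_mul]
    have hval : (if i = s then (1:ℝ) else 0) * (if j = t then 1 else 0)
        - (if i = t then (1:ℝ) else 0) * (if j = s then 1 else 0)
        = if i = s ∧ j = t then 1 else 0 := by
      by_cases h1 : i = s
      · by_cases h2 : j = t
        · subst h1; subst h2
          simp [hij.ne, hij.ne']
        · subst h1
          simp [h2, hst.ne]
      · by_cases hit : i = t
        · by_cases hjs : j = s
          · exfalso
            have : i < i := by
              calc i < j := hij
                _ = s := hjs
                _ < t := hst
                _ = i := hit.symm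
            exact absurd this (lt_irrefl i)
          · simp [h1, hjs]
        · simp [h1, hit]
    rw [hval]
    have hiff : ((⟨(i, j), hij⟩ : PairLT m) = ⟨(s, t), hst⟩) ↔ (i = s ∧ j = t) := by
      simp [Subtype.ext_iff, Prod.ext_iff]
    by_cases h : i = s ∧ j = t
    · rw [if_pos h, if_pos (hiff.mpr h), mul_one]
    · rw [if_neg h, if_neg (fun hh => h (hiff.mp hh)), mul_zero]
  rw [Finset.sum_congr rfl (fun p _ => key p)] at happ
  rw [Finset.sum_ite_eq' Finset.univ (⟨(s, t), hst⟩ : PairLT m)] at happ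
  simpa using happ

noncomputable def basis2 : Module.Basis (PairLT m) ℝ (⋀[ℝ]^2 M) :=
  Module.Basis.mk (wFam_indep b) (span_wFam_top b).ge

lemma finrank_exteriorPower_two (b : Module.Basis (Fin m) ℝ M) :
    Module.finrank ℝ (⋀[ℝ]^2 M) = Fintype.card (PairLT m) := by
  haveI : Module.Finite ℝ (⋀[ℝ]^2 M) := Module.Finite.of_basis (basis2 b)
  exact Module.finrank_eq_card_basis (basis2 b)


/-! ### Specific constructions for the theorem -/

/-- the basic quadratic bivector-valued functions -/
noncomputable def hBase (n : ℕ) (p q j l : Fin n) :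
    (Fin n → ℝ) → ExteriorAlgebra ℝ (Fin n → ℝ) :=
  fun x => (x p * x q) • (ι ℝ (Pi.single j 1 : Fin n → ℝ) * ι ℝ (Pi.single l 1 : Fin n → ℝ))

/-- the generating family for the range of `J²` -/
noncomputable def gFam (n : ℕ) : (PairLE n × PairLT n) →
    ((Fin n → ℝ) → ExteriorAlgebra ℝ (Fin n → ℝ)) :=
  fun t => hBase n t.1.1.1 t.1.1.2 t.2.1.1 t.2.1.2

lemma stdBasisMatrix_transpose_mulVec {n : ℕ} (p j : Fin n) (x : Fin n → ℝ) :
    (Matrix.single p j (1:ℝ))ᵀ *ᵥ x = x p • (Pi.single j 1 : Fin n → ℝ) := by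
  ext m
  simp [Matrix.mulVec, dotProduct, Matrix.single, Matrix.transpose_apply,
    Pi.single_apply, ite_and, eq_comm]

lemma ιMulti_smul_smul {n : ℕ} (c d : ℝ) (u v : Fin n → ℝ) :
    ιMulti ℝ 2 ![c • u, d • v] = (c * d) • ιMulti ℝ 2 ![u, v] := by
  rw [ιMulti_two, ιMulti_two, map_smul, map_smul, smul_mul_assoc, mul_smul_comm, smul_smul]

lemma hBase_mem_span_of_lt {n : ℕ} (p q j l : Fin n) (hjl : j < l) :
    hBase n p q j l ∈ Submodule.span ℝ (Set.range (gFam n)) := by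
  rcases le_or_gt p q with hpq | hqp
  · exact Submodule.subset_span ⟨(⟨(p, q), hpq⟩, ⟨(j, l), hjl⟩), rfl⟩
  · have : hBase n p q j l = gFam n (⟨(q, p), hqp.le⟩, ⟨(j, l), hjl⟩) := by
      funext x
      simp only [hBase, gFam]
      rw [mul_comm (x q) (x p)]
    rw [this]
    exact Submodule.subset_span (Set.mem_range_self _)

lemma hBase_mem_span {n : ℕ} (p q j l : Fin n) :
    hBase n p q j l ∈ Submodule.span ℝ (Set.range (gFam n)) := by
  rcases lt_trichotomy j l with h | h | h
  · exact hBase_mem_span_of_lt p q j l h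
  · subst h
    have : hBase n p q j j = 0 := by
      funext x
      simp [hBase, ι_sq_zero]
    rw [this]; exact Submodule.zero_mem _
  · have : hBase n p q j l = -hBase n p q l j := by
      funext x
      simp only [hBase, Pi.neg_apply]
      rw [ι_mul_ι_anticomm, smul_neg]
    rw [this]
    exact Submodule.neg_mem _ (hBase_mem_span_of_lt p q l j h)

lemma coord2_single_single {n : ℕ} (j l j' l' : Fin n) (hjl : j < l) (hjl' : j' < l') :
    coord2 (LinearMap.proj j) (LinearMap.proj l)
      (ι ℝ (Pi.single j' 1 : Fin n → ℝ) * ι ℝ (Pi.single l' 1 : Fin n → ℝ))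
      = if j' = j ∧ l' = l then 1 else 0 := by
  rw [coord2_ι_mul_ι]
  simp only [LinearMap.proj_apply]
  rw [Pi.single_apply j' (1:ℝ) j, Pi.single_apply l' (1:ℝ) l,
    Pi.single_apply j' (1:ℝ) l, Pi.single_apply l' (1:ℝ) j]
  have hsecond : (if l = j' then (1:ℝ) else 0) * (if j = l' then 1 else 0) = 0 := by
    by_cases h3 : l = j'
    · by_cases h4 : j = l'
      · exfalso
        have : l < l := by
          calc l = j' := h3
            _ < l' := hjl'
            _ = j := h4.symm
            _ < l := hjl
        exact absurd this (lt_irrefl _)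
      · rw [if_neg h4, mul_zero]
    · rw [if_neg h3, zero_mul]
  rw [hsecond, sub_zero]
  by_cases hA : j' = j
  · by_cases hB : l' = l
    · simp [hA, hB]
    · simp [hA, hB, Ne.symm hB]
  · simp [hA, Ne.symm hA]

lemma gFam_indep (n : ℕ) : LinearIndependent ℝ (gFam n) := by
  rw [Fintype.linearIndependent_iff]
  intro c hc
  have hzero : ∀ (j l : Fin n), j < l → ∀ x : Fin n → ℝ,
      (∑ t : PairLE n × PairLT n,
        c t * (if t.2.1.1 = j ∧ t.2.1.2 = l then x t.1.1.1 * x t.1.1.2 else 0)) = 0 := by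
    intro j l hjl x
    have h1 := congrFun hc x
    simp only [Finset.sum_apply, Pi.smul_apply, Pi.zero_apply] at h1
    have h2 := congrArg (coord2 (LinearMap.proj j) (LinearMap.proj l)) h1
    rw [map_sum, map_zero] at h2
    have h3 : ∀ t : PairLE n × PairLT n,
        coord2 (LinearMap.proj j) (LinearMap.proj l) (c t • gFam n t x)
        = c t * (if t.2.1.1 = j ∧ t.2.1.2 = l then x t.1.1.1 * x t.1.1.2 else 0) := by
      rintro ⟨⟨⟨p', q'⟩, hpq'⟩, ⟨⟨j', l'⟩, hjl'⟩⟩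
      simp only [gFam, hBase, map_smul, smul_eq_mul]
      rw [coord2_single_single j l j' l' hjl hjl']
      by_cases h : j' = j ∧ l' = l
      · rw [if_pos h, if_pos h]; ring
      · rw [if_neg h, if_neg h]; ring
    exact (Finset.sum_congr rfl (fun t _ => (h3 t).symm)).trans h2
  have stepA : ∀ (p : Fin n) (j l : Fin n) (hjl : j < l),
      c (⟨(p, p), le_refl p⟩, ⟨(j, l), hjl⟩) = 0 := by
    intro p j l hjl
    have h := hzero j l hjl (Pi.single p 1)
    rw [Finset.sum_eq_single_of_mem (⟨(p, p), le_refl p⟩, ⟨(j, l), hjl⟩)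
      (Finset.mem_univ _)] at h
    · simpa [Pi.single_apply] using h
    · rintro ⟨⟨⟨a, b⟩, hab⟩, ⟨⟨j', l'⟩, hjl'⟩⟩ - hne
      by_cases hmatch : j' = j ∧ l' = l
      · obtain ⟨rfl, rfl⟩ := hmatch
        rw [if_pos ⟨rfl, rfl⟩]
        rw [Pi.single_apply p (1:ℝ) a, Pi.single_apply p (1:ℝ) b]
        by_cases ha : a = p
        · by_cases hb : b = p
          · exfalso; apply hne; subst ha; subst hb; rfl
          · rw [if_neg hb, mul_zero, mul_zero]
        · rw [if_neg ha, zero_mul, mul_zero]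
      · rw [if_neg hmatch, mul_zero]
  rintro ⟨⟨⟨p, q⟩, hpq⟩, ⟨⟨j, l⟩, hjl⟩⟩
  rcases eq_or_lt_of_le hpq with heq | hlt
  · obtain rfl : p = q := heq
    exact stepA p j l hjl
  · set x : Fin n → ℝ := Pi.single p 1 + Pi.single q 1 with hx
    have hxp : x p = 1 := by
      simp [hx, Pi.single_apply, hlt.ne]
    have hxq : x q = 1 := by
      simp [hx, Pi.single_apply, hlt.ne']
    have hxz : ∀ a : Fin n, a ≠ p → a ≠ q → x a = 0 := by
      intro a h1 h2
      simp [hx, Pi.single_apply, h1, h2]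
    have h := hzero j l hjl x
    rw [Finset.sum_eq_single_of_mem (⟨(p, q), hpq⟩, ⟨(j, l), hjl⟩)
      (Finset.mem_univ _)] at h
    · rw [if_pos ⟨rfl, rfl⟩, hxp, hxq, mul_one, mul_one] at h
      exact h
    · rintro ⟨⟨⟨a, b⟩, hab⟩, ⟨⟨j', l'⟩, hjl'⟩⟩ - hne
      by_cases hmatch : j' = j ∧ l' = l
      · obtain ⟨rfl, rfl⟩ := hmatch
        rw [if_pos ⟨rfl, rfl⟩]
        by_cases ha : a = p
        · by_cases hb : b = q
          · exfalso; apply hne; subst ha; subst hb; rfl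
          · by_cases hbp : b = p
            · have hba : b = a := by rw [ha, hbp]
              have hc0 : c (⟨(a, b), hab⟩, ⟨(j', l'), hjl'⟩) = 0 := by
                subst hba; exact stepA b j' l' hjl'
              rw [hc0, zero_mul]
            · rw [hxz b hbp hb, mul_zero, mul_zero]
        · by_cases haq : a = q
          · by_cases hbq : b = q
            · have hba : b = a := by rw [haq, hbq]
              have hc0 : c (⟨(a, b), hab⟩, ⟨(j', l'), hjl'⟩) = 0 := by
                subst hba; exact stepA b j' l' hjl'
              rw [hc0, zero_mul]
            · have hbp : b ≠ p := by
                intro hh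
                subst hh; subst haq
                exact absurd (hlt.trans_le hab) (lt_irrefl _)
              rw [hxz b hbp hbq, mul_zero, mul_zero]
          · rw [hxz a ha haq, zero_mul, mul_zero]
      · rw [if_neg hmatch, mul_zero]

end Stmt6Aux

open Stmt6Aux

/-- The linear map `J² : Λ²(gl(n,ℝ)) → (ℝⁿ → Λ²(ℝⁿ))` determined
by `J²(A ∧ B)(x) = (Aᵀx) ∧ (Bᵀx)` has kernel of dimension `n²(n²−1)/4`.
Here `Λ²(gl(n,ℝ))` is the second exterior power `⋀[ℝ]^2` (a submodule of the
exterior algebra), and the codomain consists of functions from `ℝⁿ` to the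
exterior algebra of `ℝⁿ` (in which `Λ²(ℝⁿ)` sits). -/
theorem stmt_6 (n : ℕ) (hn : 1 ≤ n)
    (J2 : ⋀[ℝ]^2 (Matrix (Fin n) (Fin n) ℝ) →ₗ[ℝ]
          ((Fin n → ℝ) → ExteriorAlgebra ℝ (Fin n → ℝ)))
    (hJ2 : ∀ (A B : Matrix (Fin n) (Fin n) ℝ) (x : Fin n → ℝ),
      J2 ⟨ExteriorAlgebra.ιMulti ℝ 2 ![A, B],
          ExteriorAlgebra.ιMulti_range ℝ 2 (Set.mem_range_self _)⟩ x
        = ExteriorAlgebra.ιMulti ℝ 2 ![Aᵀ *ᵥ x, Bᵀ *ᵥ x]) :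
    Module.finrank ℝ (LinearMap.ker J2) = n ^ 2 * (n ^ 2 - 1) / 4 := by
  classical
  let bM : Module.Basis (Fin (n*n)) ℝ (Matrix (Fin n) (Fin n) ℝ) :=
    (Matrix.stdBasis ℝ (Fin n) (Fin n)).reindex finProdFinEquiv
  haveI : Module.Finite ℝ (⋀[ℝ]^2 (Matrix (Fin n) (Fin n) ℝ)) :=
    Module.Finite.of_basis (basis2 bM)
  have hbM : ∀ k : Fin (n*n), bM k
      = Matrix.single (finProdFinEquiv.symm k).1 (finProdFinEquiv.symm k).2 1 := by
    intro k
    show (Matrix.stdBasis ℝ (Fin n) (Fin n)).reindex finProdFinEquiv k = _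
    rw [Module.Basis.reindex_apply]
    exact Matrix.stdBasis_eq_single (R := ℝ) _ _
  have hw : ∀ (p j q l : Fin n),
      J2 ⟨ExteriorAlgebra.ιMulti ℝ 2
            ![Matrix.single p j 1, Matrix.single q l 1],
          ExteriorAlgebra.ιMulti_range ℝ 2 (Set.mem_range_self _)⟩
        = hBase n p q j l := by
    intro p j q l
    funext x
    rw [hJ2, stdBasisMatrix_transpose_mulVec, stdBasisMatrix_transpose_mulVec,
      ιMulti_smul_smul]
    simp only [hBase]
    rw [ιMulti_two]
  have hrange : LinearMap.range J2 = Submodule.span ℝ (Set.range (gFam n)) := by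
    apply le_antisymm
    · rw [LinearMap.range_eq_map, ← span_wFam_top bM, Submodule.map_span, Submodule.span_le]
      rintro _ ⟨_, ⟨p, rfl⟩, rfl⟩
      have hwp : wFam bM p = ⟨ExteriorAlgebra.ιMulti ℝ 2
          ![Matrix.single (finProdFinEquiv.symm p.1.1).1
              (finProdFinEquiv.symm p.1.1).2 1,
            Matrix.single (finProdFinEquiv.symm p.1.2).1
              (finProdFinEquiv.symm p.1.2).2 1],
          ExteriorAlgebra.ιMulti_range ℝ 2 (Set.mem_range_self _)⟩ := by
        apply Subtype.ext
        show ExteriorAlgebra.ιMulti ℝ 2 ![bM p.1.1, bM p.1.2] = _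
        rw [hbM p.1.1, hbM p.1.2]
      rw [hwp, hw]
      exact hBase_mem_span _ _ _ _
    · rw [Submodule.span_le]
      rintro _ ⟨t, rfl⟩
      exact ⟨_, hw t.1.1.1 t.2.1.1 t.1.1.2 t.2.1.2⟩
  have hr1 : Module.finrank ℝ (LinearMap.range J2)
      = Fintype.card (PairLE n) * Fintype.card (PairLT n) := by
    rw [hrange, finrank_span_eq_card (gFam_indep n), Fintype.card_prod]
  have hr2 := LinearMap.finrank_range_add_finrank_ker J2
  have hr3 : Module.finrank ℝ (⋀[ℝ]^2 (Matrix (Fin n) (Fin n) ℝ))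
      = Fintype.card (PairLT (n*n)) := finrank_exteriorPower_two bM
  have c1 := card_pairLE n
  have c2 := card_pairLT n
  have c3 := card_pairLT (n*n)
  obtain ⟨k, rfl⟩ : ∃ k, n = k + 1 := ⟨n - 1, by omega⟩
  have e1 : (k+1)^2 * ((k+1)^2 - 1)
      = 4 * (Fintype.card (PairLE (k+1)) * Fintype.card (PairLT (k+1))) := by
    have hsq : (k+1)^2 = k*k + 2*k + 1 := by ring
    have hsub : (k+1)^2 - 1 = k*k + 2*k := by rw [hsq]; omega
    have hprod : (k+1)^2 * ((k+1)^2 - 1) = ((k+1)*((k+1)+1)) * ((k+1)*((k+1)-1)) := by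
      rw [hsub, hsq, show (k+1) - 1 = k from rfl]
      ring
    rw [hprod, ← c1, ← c2]
    ring
  have e2 : Fintype.card (PairLT ((k+1)*(k+1))) * 2 = (k+1)^2 * ((k+1)^2 - 1) := by
    rw [c3]
    have : (k+1)^2 = (k+1)*(k+1) := by ring
    rw [this]
  rw [hr3] at hr2
  rw [hr1] at hr2
  obtain ⟨m, hm⟩ : ∃ m, Fintype.card (PairLE (k+1)) * Fintype.card (PairLT (k+1)) = m :=
    ⟨_, rfl⟩
  rw [hm] at hr2 e1
  obtain ⟨R, hR⟩ : ∃ R, (k+1)^2 * ((k+1)^2 - 1) = R := ⟨_, rfl⟩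
  rw [hR] at e1 e2 ⊢
  omega
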